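/- Let d ≥ 2 and A ⊂ Z^d finite. The Z^d-shift of finite type Ω_A (the set of ω ∈ A^{Z^d} with n ↦ n + ω_n a bijection of Z^d) has positive topological entropy if and only if |A| ≥ 3. -/

import Mathlib

open Classical Filter Function

noncomputable section
namespace PEaux

variable {X I : Type*}

/-- Coherence of a chart of "tracks": if two chart points coincide, the whole
parametrized tracks coincide with matching time shift. -/
def DCoh (h : I → ℤ → X) : Prop :=
  ∀ p t q s, h p t = h q s → ∀ m : ℤ, h p (t + m) = h q (s + m)

/-- Move `k` steps along the tracks, identity off the tracks. -/
noncomputable def tmap (h : I → ℤ → X) (k : ℤ) (x : X) : X :=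
  if hx : ∃ pt : I × ℤ, h pt.1 pt.2 = x then h hx.choose.1 (hx.choose.2 + k) else x

lemma tmap_on {h : I → ℤ → X} (hc : DCoh h) (p : I) (t k : ℤ) :
    tmap h k (h p t) = h p (t + k) := by
  have hx : ∃ pt : I × ℤ, h pt.1 pt.2 = h p t := ⟨(p, t), rfl⟩
  rw [tmap, dif_pos hx]
  exact hc _ _ _ _ hx.choose_spec k

lemma tmap_off {h : I → ℤ → X} {x : X} (hx : ¬∃ pt : I × ℤ, h pt.1 pt.2 = x) (k : ℤ) :
    tmap h k x = x := dif_neg hx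

lemma tmap_bij {h : I → ℤ → X} (hc : DCoh h) (k : ℤ) : Function.Bijective (tmap h k) := by
  have li : ∀ x, tmap h (-k) (tmap h k x) = x := by
    intro x
    by_cases hx : ∃ pt : I × ℤ, h pt.1 pt.2 = x
    · obtain ⟨⟨p, t⟩, hpt⟩ := hx
      rw [← hpt, tmap_on hc, tmap_on hc]
      simp
    · rw [tmap_off hx, tmap_off hx]
  have ri : ∀ x, tmap h k (tmap h (-k) x) = x := by
    intro x
    by_cases hx : ∃ pt : I × ℤ, h pt.1 pt.2 = x
    · obtain ⟨⟨p, t⟩, hpt⟩ := hx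
      rw [← hpt, tmap_on hc, tmap_on hc]
      simp
    · rw [tmap_off hx, tmap_off hx]
  exact ⟨Function.LeftInverse.injective li, Function.RightInverse.surjective ri⟩


/-- Data for the "paths with a binary choice per period" construction. -/
structure PD (d : ℕ) where
  u : Fin d → ℤ
  w : Fin d → ℤ
  huw : u ≠ w
  jt : Fin d
  rho : (Fin d → ℤ) → (Fin d → ℤ)
  hrho : ∀ y i, rho (Function.update y jt i) = rho y
  key : ∀ (y y' : Fin d → ℤ) (P Q : ℤ), rho y + P • u + Q • w = rho y' → P - Q ≤ 2 → Q - P ≤ 2 →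
      P = 0 ∧ Q = 0 ∧ Function.update y jt 0 = Function.update y' jt 0

variable {d : ℕ}

def bu (D : PD d) (ξ : (Fin d → ℤ) → Bool) (y : Fin d → ℤ) (T : ℤ) : ℤ :=
  if T % 2 = 1 ∧ ξ (Function.update y D.jt (T / 2)) = true then 1 else 0

def bw (D : PD d) (ξ : (Fin d → ℤ) → Bool) (y : Fin d → ℤ) (T : ℤ) : ℤ :=
  if T % 2 = 1 ∧ ξ (Function.update y D.jt (T / 2)) = false then 1 else 0

lemma bu01 (D : PD d) (ξ) (y) (T) : bu D ξ y T = 0 ∨ bu D ξ y T = 1 := by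
  unfold bu; split <;> simp

lemma bw01 (D : PD d) (ξ) (y) (T) : bw D ξ y T = 0 ∨ bw D ξ y T = 1 := by
  unfold bw; split <;> simp

lemma bu_add_bw (D : PD d) (ξ) (y) (T) : bu D ξ y T + bw D ξ y T = T % 2 := by
  have h2 : T % 2 = 0 ∨ T % 2 = 1 := Int.emod_two_eq_zero_or_one T
  unfold bu bw
  rcases h2 with h | h <;>
    rcases hb : ξ (Function.update y D.jt (T / 2)) <;> simp [h, hb]

def cell (D : PD d) (ξ : (Fin d → ℤ) → Bool) (y : Fin d → ℤ) (T : ℤ) : Fin d → ℤ :=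
  D.rho y + (T / 2) • (D.u + D.w) + bu D ξ y T • D.u + bw D ξ y T • D.w

lemma arith1 (b1 b2 b3 b4 : ℤ) (h1 : b1 = 0 ∨ b1 = 1) (h2 : b2 = 0 ∨ b2 = 1)
    (h3 : b3 = 0 ∨ b3 = 1) (h4 : b4 = 0 ∨ b4 = 1) (e e' : ℤ) :
    (e - e' + (b1 - b2)) - (e - e' + (b3 - b4)) ≤ 2 := by omega

lemma arith2 (T T' b1 b2 b3 b4 : ℤ) (h1 : b1 = 0 ∨ b1 = 1) (h2 : b2 = 0 ∨ b2 = 1)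
    (h3 : b3 = 0 ∨ b3 = 1) (h4 : b4 = 0 ∨ b4 = 1)
    (h5 : b1 + b3 = T % 2) (h6 : b2 + b4 = T' % 2)
    (hP0 : T / 2 - T' / 2 + (b1 - b2) = 0)
    (hQ0 : T / 2 - T' / 2 + (b3 - b4) = 0) : T = T' := by omega

lemma cell_inj (D : PD d) (ξ) {y y' : Fin d → ℤ} {T T' : ℤ}
    (h : cell D ξ y T = cell D ξ y' T') :
    D.rho y = D.rho y' ∧ Function.update y D.jt 0 = Function.update y' D.jt 0 ∧ T = T' := by
  have h1 := bu01 D ξ y T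
  have h2 := bu01 D ξ y' T'
  have h3 := bw01 D ξ y T
  have h4 := bw01 D ξ y' T'
  have h5 := bu_add_bw D ξ y T
  have h6 := bu_add_bw D ξ y' T'
  set P : ℤ := T / 2 - T' / 2 + (bu D ξ y T - bu D ξ y' T') with hP
  set Q : ℤ := T / 2 - T' / 2 + (bw D ξ y T - bw D ξ y' T') with hQ
  have heq : D.rho y + P • D.u + Q • D.w = D.rho y' := by
    funext j
    have hj := congrFun h j
    simp only [cell, Pi.add_apply, Pi.smul_apply, smul_eq_mul] at hj
    simp only [Pi.add_apply, Pi.smul_apply, smul_eq_mul, hP, hQ]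
    ring_nf; ring_nf at hj; linarith
  obtain ⟨hP0, hQ0, hupd⟩ := D.key y y' P Q heq
    (arith1 _ _ _ _ h1 h2 h3 h4 _ _) (by have := arith1 _ _ _ _ h3 h4 h1 h2 (T / 2) (T' / 2); omega)
  rw [hP] at hP0
  rw [hQ] at hQ0
  refine ⟨?_, hupd, arith2 T T' _ _ _ _ h1 h2 h3 h4 h5 h6 hP0 hQ0⟩
  have hPz : P = 0 := hP.trans hP0
  have hQz : Q = 0 := hQ.trans hQ0
  rw [hPz, hQz] at heq
  simpa using heq



lemma cell_track_eq (D : PD d) (ξ) {y y' : Fin d → ℤ}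
    (h1 : D.rho y = D.rho y') (h2 : Function.update y D.jt 0 = Function.update y' D.jt 0) :
    cell D ξ y = cell D ξ y' := by
  have hupd : ∀ n : ℤ, Function.update y D.jt n = Function.update y' D.jt n := by
    intro n
    rw [← Function.update_idem (a := D.jt) (v := 0) (w := n) (f := y),
        ← Function.update_idem (a := D.jt) (v := 0) (w := n) (f := y'), h2]
  funext T
  simp only [cell, bu, bw, h1, hupd]

lemma cell_coh (D : PD d) (ξ) : DCoh (cell D ξ) := by
  intro p t q s h m
  obtain ⟨h1, h2, h3⟩ := cell_inj D ξ h
  subst h3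
  rw [cell_track_eq D ξ h1 h2]

/-- The permutation of `ℤ^d`: move one step along the paths. -/
def tau (D : PD d) (ξ : (Fin d → ℤ) → Bool) : (Fin d → ℤ) → (Fin d → ℤ) :=
  tmap (cell D ξ) 1

lemma tau_bij (D : PD d) (ξ) : Function.Bijective (tau D ξ) :=
  tmap_bij (cell_coh D ξ) 1

lemma tau_step (D : PD d) (ξ) (x : Fin d → ℤ) :
    tau D ξ x - x = 0 ∨ tau D ξ x - x = D.u ∨ tau D ξ x - x = D.w := by
  by_cases hx : ∃ pt : (Fin d → ℤ) × ℤ, cell D ξ pt.1 pt.2 = x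
  · obtain ⟨⟨p, t⟩, hpt⟩ := hx
    rw [← hpt]
    rw [tau, tmap_on (cell_coh D ξ)]
    have hmod := Int.emod_two_eq_zero_or_one t
    rcases hmod with hm | hm
    · -- t even: step is bu/bw of t+1
      have e1 : (t + 1) / 2 = t / 2 := by omega
      have e2 : (t + 1) % 2 = 1 := by omega
      by_cases hb : ξ (Function.update p D.jt (t / 2)) = true
      · right; left
        funext j
        simp only [cell, bu, bw, e1, e2, hm, hb, Pi.add_apply, Pi.sub_apply, Pi.smul_apply,
          smul_eq_mul]
        simp [hb]
        try ring
      · right; right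
        funext j
        simp only [cell, bu, bw, e1, e2, hm, hb, Pi.add_apply, Pi.sub_apply, Pi.smul_apply,
          smul_eq_mul]
        simp [hb]
        try ring
    · -- t odd
      have e1 : (t + 1) / 2 = t / 2 + 1 := by omega
      have e2 : (t + 1) % 2 = 0 := by omega
      by_cases hb : ξ (Function.update p D.jt (t / 2)) = true
      · right; right
        funext j
        simp only [cell, bu, bw, e1, e2, hm, hb, Pi.add_apply, Pi.sub_apply, Pi.smul_apply,
          smul_eq_mul]
        simp [hb]
        try ring
      · right; left
        funext j
        simp only [cell, bu, bw, e1, e2, hm, hb, Pi.add_apply, Pi.sub_apply, Pi.smul_apply,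
          smul_eq_mul]
        simp [hb]
        try ring
  · left
    rw [tau, tmap_off hx]
    simp

/-- The deterministic "even" cells where bits are read. -/
def ecell (D : PD d) (z : Fin d → ℤ) : Fin d → ℤ :=
  D.rho z + (z D.jt) • (D.u + D.w)

lemma ecell_eq_cell (D : PD d) (ξ) (z : Fin d → ℤ) :
    ecell D z = cell D ξ z (2 * z D.jt) := by
  have e1 : (2 * z D.jt) / 2 = z D.jt := by omega
  have e2 : (2 * z D.jt) % 2 = 0 := by omega
  simp [ecell, cell, bu, bw, e1, e2]

lemma tau_read (D : PD d) (ξ) (z : Fin d → ℤ) :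
    tau D ξ (ecell D z) = ecell D z + (if ξ z then D.u else D.w) := by
  rw [ecell_eq_cell D ξ z, tau, tmap_on (cell_coh D ξ)]
  have e1 : (2 * z D.jt + 1) / 2 = z D.jt := by omega
  have e2 : (2 * z D.jt + 1) % 2 = 1 := by omega
  have e3 : (2 * z D.jt) / 2 = z D.jt := by omega
  have e4 : (2 * z D.jt) % 2 = 0 := by omega
  have hupd : Function.update z D.jt (z D.jt) = z := Function.update_eq_self _ _
  by_cases hb : ξ z = true
  · funext j
    simp only [cell, bu, bw, e1, e2, e3, e4, hupd, hb, Pi.add_apply, Pi.smul_apply, smul_eq_mul]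
    simp [hb]
  · funext j
    simp only [cell, bu, bw, e1, e2, e3, e4, hupd, hb, Pi.add_apply, Pi.smul_apply, smul_eq_mul]
    try simp [hb]

lemma ecell_inj (D : PD d) : Function.Injective (ecell D) := by
  intro z z' h
  have h' : cell D (fun _ => false) z (2 * z D.jt) = cell D (fun _ => false) z' (2 * z' D.jt) := by
    rw [← ecell_eq_cell, ← ecell_eq_cell]; exact h
  obtain ⟨h1, h2, h3⟩ := cell_inj D _ h'
  have hjt : z D.jt = z' D.jt := by omega
  funext j
  by_cases hj : j = D.jt
  · rw [hj]; exact hjt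
  · have := congrFun h2 j
    rwa [Function.update_of_ne hj, Function.update_of_ne hj] at this


end PEaux

/-- The `ℤ^d`-SFT of permutation configurations with movement in `A`. -/
def OmegaA (d : ℕ) (A : Finset (Fin d → ℤ)) : Set ((Fin d → ℤ) → (Fin d → ℤ)) :=
  {ω | (∀ n, ω n ∈ A) ∧ Function.Bijective (fun n => n + ω n)}

/-- Topological entropy of a `ℤ^d`-subshift: exponential growth rate (in the
volume `N^d`) of the number of patterns on the box `{0,…,N-1}^d`. -/
noncomputable def entd (d : ℕ) (Ω : Set ((Fin d → ℤ) → (Fin d → ℤ))) : ℝ :=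
  Filter.limsup (fun N : ℕ =>
    Real.log (Nat.card {w : (Fin d → Fin N) → (Fin d → ℤ) //
      ∃ ω ∈ Ω, ∀ i, w i = ω (fun j => ((i j : ℕ) : ℤ))}) / (N : ℝ) ^ d)
    Filter.atTop

namespace PEaux

variable {d : ℕ}

/-- The configuration associated to path data and bits. -/
def conf (D : PD d) (x : Fin d → ℤ) (ξ : (Fin d → ℤ) → Bool) :
    (Fin d → ℤ) → (Fin d → ℤ) :=
  fun n => x + (tau D ξ n - n)

lemma conf_mem (D : PD d) (x : Fin d → ℤ) (ξ) (A : Finset (Fin d → ℤ))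
    (hx : x ∈ A) (hy : x + D.u ∈ A) (hz : x + D.w ∈ A) (n : Fin d → ℤ) :
    conf D x ξ n ∈ A := by
  rcases tau_step D ξ n with h | h | h <;> simp [conf, h, hx, hy, hz]

lemma conf_omega (D : PD d) (x : Fin d → ℤ) (ξ) (A : Finset (Fin d → ℤ))
    (hx : x ∈ A) (hy : x + D.u ∈ A) (hz : x + D.w ∈ A) :
    conf D x ξ ∈ OmegaA d A := by
  refine ⟨fun n => conf_mem D x ξ A hx hy hz n, ?_⟩
  have hfun : (fun n => n + conf D x ξ n) = (fun m => m + x) ∘ (tau D ξ) := by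
    funext n j
    simp [conf]
    ring
  rw [hfun]
  exact (Equiv.addRight x).bijective.comp (tau_bij D ξ)

lemma conf_read (D : PD d) (x : Fin d → ℤ) (ξ) (z : Fin d → ℤ) :
    conf D x ξ (ecell D z) = x + (if ξ z then D.u else D.w) := by
  simp [conf, tau_read D ξ z]

/-- The subtype of patterns on the `N`-window. -/
abbrev Pat (d N : ℕ) (Ω : Set ((Fin d → ℤ) → (Fin d → ℤ))) :=
  {w : (Fin d → Fin N) → (Fin d → ℤ) // ∃ ω ∈ Ω, ∀ i, w i = ω (fun j => ((i j : ℕ) : ℤ))}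

lemma pat_finite (d N : ℕ) (A : Finset (Fin d → ℤ)) : Finite (Pat d N (OmegaA d A)) := by
  have hmem : ∀ w : Pat d N (OmegaA d A), ∀ i, w.1 i ∈ A := by
    rintro ⟨w, ω, hω, hwi⟩ i
    show w i ∈ A
    rw [hwi i]
    exact hω.1 _
  have hinj : Function.Injective
      (fun w : Pat d N (OmegaA d A) => (fun i => (⟨w.1 i, hmem w i⟩ : {v // v ∈ A}))) := by
    intro w w' h
    apply Subtype.ext
    funext i
    exact congrArg Subtype.val (congrFun h i)
  exact Finite.of_injective _ hinj

lemma pat_card_le (d N : ℕ) (A : Finset (Fin d → ℤ)) :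
    Nat.card (Pat d N (OmegaA d A)) ≤ A.card ^ (N ^ d) := by
  have hmem : ∀ w : Pat d N (OmegaA d A), ∀ i, w.1 i ∈ A := by
    rintro ⟨w, ω, hω, hwi⟩ i
    show w i ∈ A
    rw [hwi i]
    exact hω.1 _
  have hinj : Function.Injective
      (fun w : Pat d N (OmegaA d A) => (fun i => (⟨w.1 i, hmem w i⟩ : {v // v ∈ A}))) := by
    intro w w' h
    apply Subtype.ext
    funext i
    exact congrArg Subtype.val (congrFun h i)
  have := Nat.card_le_card_of_injective _ hinj
  calc Nat.card (Pat d N (OmegaA d A)) ≤ Nat.card ((Fin d → Fin N) → {v // v ∈ A}) := this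
    _ = A.card ^ (N ^ d) := by
        rw [Nat.card_fun]
        simp [Nat.card_eq_fintype_card]

lemma pat_card_pos (d N : ℕ) (A : Finset (Fin d → ℤ)) (hA : A.Nonempty) :
    1 ≤ Nat.card (Pat d N (OmegaA d A)) := by
  obtain ⟨a, ha⟩ := hA
  have : (fun _ : Fin d → ℤ => a) ∈ OmegaA d A := by
    refine ⟨fun _ => ha, ?_⟩
    exact (Equiv.addRight a).bijective
  have hne : Nonempty (Pat d N (OmegaA d A)) :=
    ⟨⟨fun i => a, ⟨fun _ => a, this, fun _ => rfl⟩⟩⟩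
  have := pat_finite d N A
  exact Nat.one_le_iff_ne_zero.mpr (Nat.card_ne_zero.mpr ⟨hne, this⟩)

/-- Master counting lemma: with path data whose bit-cells for the `M`-box land in the
`N`-window, the number of `N`-window patterns is at least `2 ^ (M ^ d)`. -/
lemma count_lower (d N M : ℕ) (A : Finset (Fin d → ℤ))
    (x : Fin d → ℤ) (hx : x ∈ A) (D : PD d)
    (hy : x + D.u ∈ A) (hz : x + D.w ∈ A)
    (hcb : ∀ z : Fin d → ℤ, (∀ j, 0 ≤ z j ∧ z j < (M : ℤ)) →
      ∀ j, 0 ≤ ecell D z j ∧ ecell D z j < (N : ℤ)) :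
    2 ^ (M ^ d) ≤ Nat.card (Pat d N (OmegaA d A)) := by
  classical
  have hfin := pat_finite d N A
  -- embed bits into everywhere-defined bit fields
  let ext : ((Fin d → Fin M) → Bool) → ((Fin d → ℤ) → Bool) := fun ζ z =>
    if h : ∀ j, 0 ≤ z j ∧ z j < (M : ℤ) then
      ζ (fun j => ⟨(z j).toNat, by
        have := h j
        omega⟩)
    else false
  let Φ : ((Fin d → Fin M) → Bool) → Pat d N (OmegaA d A) := fun ζ =>
    ⟨fun i => conf D x (ext ζ) (fun j => ((i j : ℕ) : ℤ)),
     ⟨conf D x (ext ζ), conf_omega D x (ext ζ) A hx hy hz, fun _ => rfl⟩⟩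
  have hΦ : Function.Injective Φ := by
    intro ζ ζ' h
    funext yb
    by_contra hne
    -- the bit index as an integer vector
    set z : Fin d → ℤ := fun j => ((yb j : ℕ) : ℤ) with hzdef
    have hzb : ∀ j, 0 ≤ z j ∧ z j < (M : ℤ) := by
      intro j
      constructor
      · positivity
      · show ((yb j : ℕ) : ℤ) < (M : ℤ)
        exact_mod_cast (yb j).2
    have hcz := hcb z hzb
    -- the window index corresponding to the bit cell
    let i : Fin d → Fin N := fun j => ⟨(ecell D z j).toNat, by
      have := hcz j; omega⟩
    have hival : (fun j => ((i j : ℕ) : ℤ)) = ecell D z := by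
      funext j
      have := hcz j
      simp [i]
      omega
    have h1 := congrFun (congrArg Subtype.val h) i
    simp only [Φ] at h1
    rw [hival] at h1
    rw [conf_read, conf_read] at h1
    have hext : ∀ ζ0 : (Fin d → Fin M) → Bool, ext ζ0 z = ζ0 yb := by
      intro ζ0
      have : (fun j => (⟨(z j).toNat, by have := hzb j; omega⟩ : Fin M)) = yb := by
        funext j
        apply Fin.ext
        simp [hzdef]
      simp only [ext, dif_pos hzb, this]
    rw [hext ζ, hext ζ'] at h1
    have huw := D.huw
    rcases hb : ζ yb <;> rcases hb' : ζ' yb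
    · exact hne (hb.trans hb'.symm)
    · rw [hb, hb'] at h1; simp at h1; exact huw h1.symm
    · rw [hb, hb'] at h1; simp at h1; exact huw h1
    · exact hne (hb.trans hb'.symm)
  calc (2:ℕ) ^ (M ^ d) = Nat.card ((Fin d → Fin M) → Bool) := by
        rw [Nat.card_fun]
        simp [Nat.card_eq_fintype_card]
    _ ≤ Nat.card (Pat d N (OmegaA d A)) := Nat.card_le_card_of_injective Φ hΦ


lemma smul_eqz {d : ℕ} {p : ℤ} {v : Fin d → ℤ} (h : p • v = 0) (hp : p ≠ 0) : v = 0 := by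
  funext j
  have := congrFun h j
  simp only [Pi.smul_apply, smul_eq_mul, Pi.zero_apply] at this ⊢
  rcases mul_eq_zero.mp this with h' | h'
  · exact absurd h' hp
  · exact h'

lemma exists_ne_coord {d : ℕ} {v : Fin d → ℤ} (hv : v ≠ 0) : ∃ j, v j ≠ 0 := by
  by_contra h
  push_neg at h
  exact hv (funext fun j => h j)

set_option maxHeartbeats 1000000 in
/-- Construction of path data, given `u`, `w` admitting no "positive" integer relation. -/
lemma build (d : ℕ) (u w : Fin d → ℤ) (hu : u ≠ 0) (hw : w ≠ 0) (huw : u ≠ w)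
    (hnopos : ¬∃ p q : ℤ, 0 < p ∧ 0 < q ∧ p • u + q • w = 0)
    (Wc : ℕ) (hW1 : 1 ≤ Wc) (hWb : ∀ j, |u j| + |w j| ≤ (Wc : ℤ)) (M : ℕ) (hM : 1 ≤ M) :
    ∃ D : PD d, D.u = u ∧ D.w = w ∧
      (∀ z : Fin d → ℤ, (∀ j, 0 ≤ z j ∧ z j < (M : ℤ)) →
        ∀ j, 0 ≤ ecell D z j ∧ ecell D z j < ((9 * Wc * M : ℕ) : ℤ)) := by
  classical
  set o : Fin d → ℤ := fun _ => 4 * (Wc : ℤ) * M with ho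
  have hWM : (1:ℤ) ≤ (Wc:ℤ) := by exact_mod_cast hW1
  have hMM : (1:ℤ) ≤ (M:ℤ) := by exact_mod_cast hM
  have hbnd : ∀ j, -(Wc:ℤ) ≤ u j + w j ∧ u j + w j ≤ (Wc:ℤ) ∧
      -(Wc:ℤ) ≤ u j - w j ∧ u j - w j ≤ (Wc:ℤ) := by
    intro j
    have h1 := hWb j
    have h2 := le_abs_self (u j)
    have h3 := neg_abs_le (u j)
    have h4 := le_abs_self (w j)
    have h5 := neg_abs_le (w j)
    refine ⟨by linarith, by linarith, by linarith, by linarith⟩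
  by_cases hrel : ∃ p q : ℤ, (p ≠ 0 ∨ q ≠ 0) ∧ p • u + q • w = 0
  · -- mixed relation case
    obtain ⟨p, q, hpq, hpq0⟩ := hrel
    have hp0 : p ≠ 0 := by
      rintro rfl
      simp only [zero_smul, zero_add] at hpq0
      have hq0 : q ≠ 0 := by
        rcases hpq with h | h
        · exact absurd rfl h
        · exact h
      exact hw (smul_eqz hpq0 hq0)
    have hq0 : q ≠ 0 := by
      rintro rfl
      simp only [zero_smul, add_zero] at hpq0
      exact hu (smul_eqz hpq0 hp0)
    -- normalize sign of p
    obtain ⟨p, q, hp, hq, hpq0⟩ :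
        ∃ p q : ℤ, 0 < p ∧ q < 0 ∧ p • u + q • w = 0 := by
      rcases lt_trichotomy p 0 with h | h | h
      · refine ⟨-p, -q, by omega, ?_, ?_⟩
        · rcases lt_trichotomy q 0 with h' | h' | h'
          · exfalso; exact hnopos ⟨-p, -q, by omega, by omega, by
              rw [neg_smul, neg_smul, ← neg_add, hpq0, neg_zero]⟩
          · exact absurd h' hq0
          · omega
        · rw [neg_smul, neg_smul, ← neg_add, hpq0, neg_zero]
      · exact absurd h hp0
      · refine ⟨p, q, h, ?_, hpq0⟩
        rcases lt_trichotomy q 0 with h' | h' | h'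
        · exact h'
        · exact absurd h' hq0
        · exact absurd ⟨p, q, h, h', hpq0⟩ hnopos
    obtain ⟨j0, hj0⟩ := exists_ne_coord hu
    have hrj : p * u j0 + q * w j0 = 0 := by
      have := congrFun hpq0 j0
      simpa [Pi.smul_apply, smul_eq_mul] using this
    refine ⟨⟨u, w, huw, j0, fun y => o + Function.update y j0 0, ?_, ?_⟩, rfl, rfl, ?_⟩
    · intro y i
      simp only [Function.update_idem]
    · intro y y' P Q heq hd1 hd2
      have hc : P * u j0 + Q * w j0 = 0 := by
        have := congrFun heq j0
        simp only [Pi.add_apply, Pi.smul_apply, smul_eq_mul, Function.update_self] at this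
        linarith
      have hk : (q * P - p * Q) * u j0 = 0 := by linear_combination q * hc - Q * hrj
      have hqp : q * P = p * Q := by
        rcases mul_eq_zero.mp hk with h' | h'
        · linarith
        · exact absurd h' hj0
      have hPQ : P = 0 ∧ Q = 0 := by
        rcases lt_trichotomy P 0 with h | h | h
        · have hQpos : 0 < Q := by nlinarith
          have : P = -1 ∧ Q = 1 := by omega
          obtain ⟨rfl, rfl⟩ := this
          exfalso
          have hqnp : q = -p := by omega
          rw [hqnp] at hpq0
          have : p • (u - w) = 0 := by
            rw [smul_sub, sub_eq_add_neg, ← neg_smul]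
            exact hpq0
          exact huw (sub_eq_zero.mp (smul_eqz this (by omega)))
        · refine ⟨h, ?_⟩
          rw [h, mul_zero] at hqp
          rcases mul_eq_zero.mp hqp.symm with h' | h'
          · omega
          · exact h'
        · have hQneg : Q < 0 := by nlinarith
          have : P = 1 ∧ Q = -1 := by omega
          obtain ⟨rfl, rfl⟩ := this
          exfalso
          have hqnp : q = -p := by omega
          rw [hqnp] at hpq0
          have : p • (u - w) = 0 := by
            rw [smul_sub, sub_eq_add_neg, ← neg_smul]
            exact hpq0
          exact huw (sub_eq_zero.mp (smul_eqz this (by omega)))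
      obtain ⟨hP0, hQ0⟩ := hPQ
      refine ⟨hP0, hQ0, ?_⟩
      rw [hP0, hQ0] at heq
      simp only [zero_smul, add_zero] at heq
      funext j
      have := congrFun heq j
      simp only [Pi.add_apply] at this
      by_cases hj : j = j0
      · subst hj; simp
      · rw [Function.update_of_ne hj, Function.update_of_ne hj]
        have h1 := congrFun heq j
        simp only [Pi.add_apply] at h1
        have : Function.update y j0 0 j = Function.update y' j0 0 j := by linarith
        rwa [Function.update_of_ne hj, Function.update_of_ne hj] at this
    · -- bounds
      intro z hz j
      have hzj := hz j
      have hzj0 := hz j0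
      have hb := hbnd j
      simp only [ecell, Pi.add_apply, Pi.smul_apply, smul_eq_mul, ho]
      have hupd : 0 ≤ Function.update z j0 0 j ∧ Function.update z j0 0 j < (M:ℤ) := by
        by_cases hj : j = j0
        · subst hj; simp; omega
        · rw [Function.update_of_ne hj]; exact hz j
      have hl : -((M:ℤ) * Wc) ≤ z j0 * (u j + w j) := by nlinarith
      have hr : z j0 * (u j + w j) ≤ (M:ℤ) * Wc := by nlinarith
      push_cast
      constructor
      · nlinarith
      · nlinarith
  · -- independent case
    obtain ⟨i1, hi1⟩ := exists_ne_coord hu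
    have hmin : ∃ i2, u i1 * w i2 - u i2 * w i1 ≠ 0 := by
      by_contra hmc
      push_neg at hmc
      have hvec : (w i1) • u + (-(u i1)) • w = 0 := by
        funext j
        simp only [Pi.add_apply, Pi.smul_apply, smul_eq_mul, Pi.zero_apply]
        linear_combination -hmc j
      exact hrel ⟨w i1, -(u i1), Or.inr (neg_ne_zero.mpr hi1), hvec⟩
    obtain ⟨i2, hdel⟩ := hmin
    have hne12 : i1 ≠ i2 := by
      rintro rfl
      exact hdel (by ring)
    have hzz : ∀ y : Fin d → ℤ,
        Function.update (Function.update y i1 0) i2 0 i1 = 0 ∧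
        Function.update (Function.update y i1 0) i2 0 i2 = 0 ∧
        ∀ j, j ≠ i1 → j ≠ i2 → Function.update (Function.update y i1 0) i2 0 j = y j := by
      intro y
      refine ⟨?_, ?_, ?_⟩
      · rw [Function.update_of_ne hne12, Function.update_self]
      · rw [Function.update_self]
      · intro j hj1 hj2
        rw [Function.update_of_ne hj2, Function.update_of_ne hj1]
    refine ⟨⟨u, w, huw, i1,
      fun y => o + Function.update (Function.update y i1 0) i2 0 + (3 * y i2) • (u - w),
      ?_, ?_⟩, rfl, rfl, ?_⟩
    · intro y i
      simp only [Function.update_idem]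
      rw [Function.update_of_ne (Ne.symm hne12)]
    · intro y y' P Q heq hd1 hd2
      obtain ⟨Dr, hDr⟩ : ∃ t, y i2 - y' i2 = t := ⟨_, rfl⟩
      have hA := congrFun heq i1
      have hB := congrFun heq i2
      simp only [Pi.add_apply, Pi.smul_apply, smul_eq_mul, Pi.sub_apply,
        (hzz y).1, (hzz y).2.1, (hzz y').1, (hzz y').2.1] at hA hB
      have e1 : (P + 3 * Dr) * u i1 + (Q - 3 * Dr) * w i1 = 0 := by
        rw [← hDr]; linear_combination hA
      have e2 : (P + 3 * Dr) * u i2 + (Q - 3 * Dr) * w i2 = 0 := by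
        rw [← hDr]; linear_combination hB
      have hα : (P + 3 * Dr) * (u i1 * w i2 - u i2 * w i1) = 0 := by
        linear_combination (w i2) * e1 - (w i1) * e2
      have hβ : (Q - 3 * Dr) * (u i1 * w i2 - u i2 * w i1) = 0 := by
        linear_combination (u i1) * e2 - (u i2) * e1
      have hα0 : P + 3 * Dr = 0 := by
        rcases mul_eq_zero.mp hα with h' | h'
        · exact h'
        · exact absurd h' hdel
      have hβ0 : Q - 3 * Dr = 0 := by
        rcases mul_eq_zero.mp hβ with h' | h'
        · exact h'
        · exact absurd h' hdel
      have hPQD : P = 0 ∧ Q = 0 ∧ Dr = 0 := by omega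
      obtain ⟨hP0, hQ0, hD0⟩ := hPQD
      have hy2 : y i2 = y' i2 := by omega
      refine ⟨hP0, hQ0, ?_⟩
      rw [hP0, hQ0] at heq
      simp only [zero_smul, add_zero] at heq
      funext j
      by_cases hj1 : j = i1
      · subst hj1; simp
      · rw [Function.update_of_ne hj1, Function.update_of_ne hj1]
        by_cases hj2 : j = i2
        · subst hj2; exact hy2
        · have hcj := congrFun heq j
          simp only [Pi.add_apply, Pi.smul_apply, smul_eq_mul, Pi.sub_apply,
            (hzz y).2.2 j hj1 hj2, (hzz y').2.2 j hj1 hj2, hy2] at hcj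
          linarith
    · -- bounds
      intro z hz j
      have hzj := hz j
      have hz1 := hz i1
      have hz2 := hz i2
      have hb := hbnd j
      simp only [ecell, Pi.add_apply, Pi.smul_apply, smul_eq_mul, Pi.sub_apply, ho]
      have hupd : 0 ≤ Function.update (Function.update z i1 0) i2 0 j ∧
          Function.update (Function.update z i1 0) i2 0 j < (M:ℤ) := by
        by_cases hj1 : j = i1
        · subst hj1; rw [Function.update_of_ne hne12, Function.update_self]; omega
        · by_cases hj2 : j = i2
          · subst hj2; rw [Function.update_self]; omega
          · rw [Function.update_of_ne hj2, Function.update_of_ne hj1]; exact hz j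
      have hl1 : -(3 * (M:ℤ) * Wc) ≤ 3 * z i2 * (u j - w j) := by nlinarith
      have hr1 : 3 * z i2 * (u j - w j) ≤ 3 * (M:ℤ) * Wc := by nlinarith
      have hl2 : -((M:ℤ) * Wc) ≤ z i1 * (u j + w j) := by nlinarith
      have hr2 : z i1 * (u j + w j) ≤ (M:ℤ) * Wc := by nlinarith
      push_cast
      constructor
      · nlinarith
      · nlinarith


lemma pick_center (d : ℕ) (a b c : Fin d → ℤ) (hab : a ≠ b) (hac : a ≠ c) (hbc : b ≠ c) :
    ∃ x y z : Fin d → ℤ, (x = a ∨ x = b) ∧ (y = a ∨ y = b) ∧ (z = c) ∧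
      y ≠ x ∧ z ≠ x ∧ y ≠ z ∧
      ¬∃ p q : ℤ, 0 < p ∧ 0 < q ∧ p • (y - x) + q • (z - x) = 0 := by
  by_cases h1 : ∃ p q : ℤ, 0 < p ∧ 0 < q ∧ p • (b - a) + q • (c - a) = 0
  · -- center b works
    refine ⟨b, a, c, Or.inr rfl, Or.inl rfl, rfl, hab, hbc.symm, hac, ?_⟩
    rintro ⟨p', q', hp', hq', hrel'⟩
    obtain ⟨p, q, hp, hq, hrel⟩ := h1
    have hw0 : (p * q' + q * (p' + q')) • (c - a) = 0 := by
      funext j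
      have h1j := congrFun hrel j
      have h2j := congrFun hrel' j
      simp only [Pi.add_apply, Pi.smul_apply, Pi.sub_apply, smul_eq_mul, Pi.zero_apply] at h1j h2j ⊢
      linear_combination (p' + q') * h1j + p * h2j
    have hpos : p * q' + q * (p' + q') ≠ 0 := by positivity
    have := smul_eqz hw0 hpos
    exact hac (sub_eq_zero.mp this).symm
  · exact ⟨a, b, c, Or.inl rfl, Or.inr rfl, rfl, hab.symm, hac.symm, hbc, h1⟩

lemma entd_pos (d : ℕ) (hd : 0 < d) (A : Finset (Fin d → ℤ)) (hA3 : 3 ≤ A.card) :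
    0 < entd d (OmegaA d A) := by
  classical
  -- three distinct elements of A
  obtain ⟨a, ha⟩ : A.Nonempty := Finset.card_pos.mp (by omega)
  obtain ⟨b, hb⟩ : (A.erase a).Nonempty := by
    apply Finset.card_pos.mp
    rw [Finset.card_erase_of_mem ha]
    omega
  obtain ⟨c, hc⟩ : ((A.erase a).erase b).Nonempty := by
    apply Finset.card_pos.mp
    rw [Finset.card_erase_of_mem hb, Finset.card_erase_of_mem ha]
    omega
  obtain ⟨hba, hbA⟩ := Finset.mem_erase.mp hb
  obtain ⟨hcb, hc2⟩ := Finset.mem_erase.mp hc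
  obtain ⟨hca, hcA⟩ := Finset.mem_erase.mp hc2
  obtain ⟨x, y, z, hxm, hym, hzm, hyx, hzx, hyz, hnopos⟩ :=
    pick_center d a b c (Ne.symm hba) (Ne.symm hca) (Ne.symm hcb)
  have hxA : x ∈ A := by rcases hxm with rfl | rfl <;> assumption
  have hyA : y ∈ A := by rcases hym with rfl | rfl <;> assumption
  have hzA : z ∈ A := by rw [hzm]; exact hcA
  set u : Fin d → ℤ := y - x with hu'
  set w : Fin d → ℤ := z - x with hw'
  have hu : u ≠ 0 := sub_ne_zero.mpr hyx
  have hw : w ≠ 0 := sub_ne_zero.mpr hzx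
  have huw : u ≠ w := by
    intro h
    exact hyz (by rw [hu', hw'] at h; exact sub_left_injective h)
  have hyA' : x + u ∈ A := by
    rw [hu']
    simpa using hyA
  have hzA' : x + w ∈ A := by
    rw [hw']
    simpa using hzA
  set Wc : ℕ := 1 + ∑ j : Fin d, ((u j).natAbs + (w j).natAbs) with hWc
  have hW1 : 1 ≤ Wc := Nat.le_add_right 1 _
  have hWb : ∀ j, |u j| + |w j| ≤ (Wc : ℤ) := by
    intro j
    have h0' : (u j).natAbs + (w j).natAbs ≤ ∑ i : Fin d, ((u i).natAbs + (w i).natAbs) :=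
      Finset.single_le_sum (f := fun i => (u i).natAbs + (w i).natAbs)
        (fun i _ => Nat.zero_le _) (Finset.mem_univ j)
    have hle : (u j).natAbs + (w j).natAbs ≤ Wc := by
      rw [hWc]
      omega
    rw [Int.abs_eq_natAbs, Int.abs_eq_natAbs]
    exact_mod_cast hle
  -- the entropy function
  set F : ℕ → ℝ := fun N =>
    Real.log (Nat.card (Pat d N (OmegaA d A))) / (N : ℝ) ^ d with hF
  have hA1 : (1:ℝ) ≤ A.card := by exact_mod_cast by omega
  have hub : ∀ N, F N ≤ Real.log A.card := by
    intro N
    rcases Nat.eq_zero_or_pos N with rfl | hN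
    · simp [hF, zero_pow (by omega : d ≠ 0)]
      positivity
    · have hcard := pat_card_le d N A
      have hpos := pat_card_pos d N A (Finset.card_pos.mp (by omega))
      have hNd : (0:ℝ) < (N:ℝ)^d := by positivity
      rw [hF, div_le_iff₀ hNd]
      calc Real.log (Nat.card (Pat d N (OmegaA d A)))
          ≤ Real.log (A.card ^ (N ^ d)) := by
            apply Real.log_le_log (by exact_mod_cast hpos)
            exact_mod_cast hcard
        _ = (N ^ d : ℕ) * Real.log A.card := by
            rw [Real.log_pow]
        _ = Real.log A.card * (N:ℝ)^d := by
            push_cast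
            ring
  have hbdd : Filter.IsBoundedUnder (· ≤ ·) Filter.atTop F :=
    ⟨Real.log A.card, Filter.eventually_map.mpr (Filter.Eventually.of_forall hub)⟩
  set cst : ℝ := Real.log 2 / ((9 * Wc : ℝ)) ^ d with hcst
  have hcstpos : 0 < cst := by
    rw [hcst]
    apply div_pos (Real.log_pos (by norm_num))
    have : (0:ℝ) < (9 * Wc : ℝ) := by positivity
    positivity
  have hfreq : ∃ᶠ N in Filter.atTop, cst ≤ F N := by
    rw [Filter.frequently_atTop]
    intro N0
    set M : ℕ := max N0 1 with hM
    have hM1 : 1 ≤ M := le_max_right _ _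
    set N : ℕ := 9 * Wc * M with hN
    refine ⟨N, ?_, ?_⟩
    · calc N0 ≤ M := le_max_left _ _
        _ ≤ 9 * Wc * M := by nlinarith
    · obtain ⟨D, hDu, hDw, hcb⟩ := build d u w hu hw huw hnopos Wc hW1 hWb M hM1
      have hcl := count_lower d N M A x hxA D
        (by rw [hDu]; exact hyA') (by rw [hDw]; exact hzA') (by rw [hN]; exact hcb)
      have hNpos : (0:ℝ) < (N:ℝ)^d := by
        have : 0 < N := by rw [hN]; positivity
        positivity
      rw [hF, hcst, div_le_div_iff₀ (by positivity) hNpos]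
      have hlog : (M ^ d : ℝ) * Real.log 2 ≤ Real.log (Nat.card (Pat d N (OmegaA d A))) := by
        have h2 : ((2:ℝ)) ^ (M ^ d) ≤ (Nat.card (Pat d N (OmegaA d A)) : ℝ) := by
          exact_mod_cast hcl
        calc (M ^ d : ℝ) * Real.log 2 = Real.log ((2:ℝ) ^ (M ^ d)) := by
              rw [Real.log_pow]; push_cast; ring
          _ ≤ _ := Real.log_le_log (by positivity) h2
      calc Real.log 2 * (N:ℝ)^d = Real.log 2 * ((9 * Wc:ℝ)^d * (M:ℝ)^d) := by
            rw [hN]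
            push_cast
            rw [mul_pow]
        _ = ((M:ℝ)^d * Real.log 2) * (9 * Wc:ℝ)^d := by ring
        _ ≤ Real.log (Nat.card (Pat d N (OmegaA d A))) * (9 * Wc:ℝ)^d := by
            apply mul_le_mul_of_nonneg_right _ (by positivity)
            calc (M:ℝ)^d * Real.log 2 = (M ^ d : ℝ) * Real.log 2 := by push_cast; ring
              _ ≤ _ := hlog
  have hle : cst ≤ Filter.limsup F Filter.atTop :=
    Filter.le_limsup_of_frequently_le hfreq hbdd
  have : entd d (OmegaA d A) = Filter.limsup F Filter.atTop := rfl
  rw [this]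
  exact lt_of_lt_of_le hcstpos hle


lemma rigid {d : ℕ} {α β : Fin d → ℤ} (hab : α ≠ β) (ω : (Fin d → ℤ) → (Fin d → ℤ))
    (hmem : ∀ n, ω n = α ∨ ω n = β) (hbij : Function.Bijective (fun n => n + ω n)) :
    ∀ n, ω (n + (β - α)) = ω n := by
  set v : Fin d → ℤ := β - α with hv'
  have hv : v ≠ 0 := sub_ne_zero.mpr (Ne.symm hab)
  have claim1 : ∀ n, ω n = β → ω (n + v) = β := by
    intro n h
    rcases hmem (n + v) with h' | h'
    · exfalso
      have hfe : n + ω n = (n + v) + ω (n + v) := by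
        rw [h, h', hv']
        abel
      have := hbij.1 hfe
      exact hv (by simpa using this.symm)
    · exact h'
  have claim2 : ∀ n, ω n = α → ω (n + v) = α := by
    intro n h
    rcases hmem (n + v) with h' | h'
    · exact h'
    · exfalso
      obtain ⟨m, hm⟩ := hbij.2 (n + β)
      simp only at hm
      rcases hmem m with hm' | hm'
      · -- m = n + v, but ω (n+v) = β
        have hma : m + α = n + β := by rw [← hm']; exact hm
        have hmeq : m = n + v := by
          have h2 : m + α = (n + v) + α := by
            rw [hma, hv']
            abel
          exact add_right_cancel h2
        rw [hmeq, h'] at hm'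
        exact hab hm'.symm
      · -- m = n, but ω n = α
        have hma : m + β = n + β := by
          calc m + β = m + ω m := by rw [hm']
            _ = n + β := hm
        have hmeq : m = n := add_right_cancel hma
        rw [hmeq, h] at hm'
        exact hab hm'
  intro n
  rcases hmem n with h | h
  · rw [claim2 n h, h]
  · rw [claim1 n h, h]

lemma periodicZ {d : ℕ} {v : Fin d → ℤ} {ω : (Fin d → ℤ) → (Fin d → ℤ)}
    (hper : ∀ n, ω (n + v) = ω n) : ∀ (n : Fin d → ℤ) (k : ℤ), ω (n + k • v) = ω n := by
  intro n k
  induction k using Int.induction_on with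
  | zero => simp
  | succ i ih =>
      have heq : n + ((i : ℤ) + 1) • v = (n + (i : ℤ) • v) + v := by
        rw [add_smul, one_smul]
        abel
      rw [heq, hper, ih]
  | pred i ih =>
      have heq : (n + (-(i : ℤ) - 1) • v) + v = n + (-(i : ℤ)) • v := by
        rw [sub_smul, one_smul]
        abel
      have := hper (n + (-(i : ℤ) - 1) • v)
      rw [heq] at this
      rw [← this, ih]

set_option maxHeartbeats 1000000 in
/-- If all configurations are `v`-periodic, window counts grow like `N ^ (d-1)`. -/
lemma count_upper (d N : ℕ) (A : Finset (Fin d → ℤ)) (α0 : Fin d → ℤ) (hα0 : α0 ∈ A)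
    (v : Fin d → ℤ) (js : Fin d) (hvj : 0 < v js) (Vm : ℕ)
    (hVb : ∀ j, |v j| ≤ (Vm : ℤ))
    (hper : ∀ ω ∈ OmegaA d A, ∀ n, ω (n + v) = ω n) :
    Nat.card (Pat d N (OmegaA d A)) ≤
      A.card ^ ((v js).toNat * (N + 2 * (N * Vm) + 1) ^ (d - 1)) := by
  classical
  set B : ℕ := N + 2 * (N * Vm) + 1 with hB
  set vh : ℕ := (v js).toNat with hvh
  set ι : (Fin d → Fin N) → (Fin d → ℤ) := fun i j => ((i j : ℕ) : ℤ) with hι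
  set rep : (Fin d → ℤ) → (Fin d → ℤ) := fun x => x - ((x js) / (v js)) • v with hrep
  have hx01 : ∀ (i : Fin d → Fin N) (j : Fin d), 0 ≤ ι i j ∧ ι i j < N := by
    intro i j
    constructor
    · show (0:ℤ) ≤ ((i j : ℕ) : ℤ)
      positivity
    · show ((i j : ℕ) : ℤ) < (N : ℤ)
      exact_mod_cast (i j).2
  have hkb : ∀ i : Fin d → Fin N, 0 ≤ (ι i js) / (v js) ∧ (ι i js) / (v js) ≤ N := by
    intro i
    have h1 := (hx01 i js).1
    have h2 := (hx01 i js).2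
    constructor
    · exact Int.ediv_nonneg h1 (le_of_lt hvj)
    · calc (ι i js) / (v js) ≤ ι i js := Int.ediv_le_self _ h1
        _ ≤ N := le_of_lt h2
  have hrjs : ∀ i : Fin d → Fin N, 0 ≤ rep (ι i) js ∧ rep (ι i) js < v js := by
    intro i
    have : rep (ι i) js = (ι i js) % (v js) := by
      simp only [hrep, Pi.sub_apply, Pi.smul_apply, smul_eq_mul]
      rw [Int.emod_def]
      ring
    rw [this]
    exact ⟨Int.emod_nonneg _ (ne_of_gt hvj), Int.emod_lt_of_pos _ hvj⟩
  have hrj : ∀ (i : Fin d → Fin N) (j : Fin d),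
      -(N * (Vm:ℤ)) ≤ rep (ι i) j ∧ rep (ι i) j ≤ N + N * (Vm:ℤ) := by
    intro i j
    have h1 := (hx01 i j).1
    have h2 := (hx01 i j).2
    have hk := hkb i
    have hvb := hVb j
    have hv1 := le_abs_self (v j)
    have hv2 := neg_abs_le (v j)
    simp only [hrep, Pi.sub_apply, Pi.smul_apply, smul_eq_mul]
    constructor
    · nlinarith [hk.1, hk.2]
    · nlinarith [hk.1, hk.2]
  -- the encoding of a window cell by its representative
  set enc : (Fin d → Fin N) → (Fin vh × ({j : Fin d // j ≠ js} → Fin B)) := fun i =>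
    (⟨(rep (ι i) js).toNat, by
        have := hrjs i
        omega⟩,
     fun j => ⟨(rep (ι i) j.1 + N * Vm).toNat, by
        have := hrj i j.1
        omega⟩) with henc
  have hdec : ∀ i i' : Fin d → Fin N, enc i = enc i' → rep (ι i) = rep (ι i') := by
    intro i i' h
    funext j
    have h1 := congrArg Prod.fst h
    have h2 := congrArg Prod.snd h
    by_cases hj : j = js
    · subst hj
      have h1' : ((enc i).1 : ℕ) = ((enc i').1 : ℕ) := congrArg Fin.val h1
      simp only [henc] at h1'
      have ha := hrjs i
      have hb := hrjs i'
      omega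
    · have h2' : (((enc i).2 ⟨j, hj⟩) : ℕ) = (((enc i').2 ⟨j, hj⟩) : ℕ) :=
        congrArg Fin.val (congrFun h2 ⟨j, hj⟩)
      simp only [henc] at h2'
      have ha := hrj i j
      have hb := hrj i' j
      omega
  have hrepval : ∀ ω ∈ OmegaA d A, ∀ i : Fin d → Fin N, ω (rep (ι i)) = ω (ι i) := by
    intro ω hΩ i
    have hZ := periodicZ (hper ω hΩ)
    have : rep (ι i) = ι i + (-(ι i js / v js)) • v := by
      simp only [hrep]
      funext j
      simp [sub_eq_add_neg]
      try ring
    rw [this, hZ]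
  have hmemW : ∀ W : Pat d N (OmegaA d A), ∀ i, W.1 i ∈ A := by
    rintro ⟨W, ω, hω, hwi⟩ i
    show W i ∈ A
    rw [hwi i]
    exact hω.1 _
  have hkey : ∀ (W : Pat d N (OmegaA d A)) (i i' : Fin d → Fin N),
      enc i = enc i' → W.1 i = W.1 i' := by
    intro W i i' h
    obtain ⟨ω, hΩ, hwi⟩ := W.2
    rw [hwi i, hwi i']
    show ω (ι i) = ω (ι i')
    rw [← hrepval ω hΩ i, ← hrepval ω hΩ i', hdec i i' h]
  set Ψ : Pat d N (OmegaA d A) → ((Fin vh × ({j : Fin d // j ≠ js} → Fin B)) → {a // a ∈ A}) :=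
    fun W q => if h : ∃ i, enc i = q then ⟨W.1 h.choose, hmemW W _⟩ else ⟨α0, hα0⟩ with hΨ
  have hinj : Function.Injective Ψ := by
    intro W W' h
    apply Subtype.ext
    funext i
    have h1 := congrFun h (enc i)
    have hex : ∃ i', enc i' = enc i := ⟨i, rfl⟩
    simp only [hΨ, dif_pos hex] at h1
    have h2 : W.1 hex.choose = W'.1 hex.choose := congrArg Subtype.val h1
    have h3 : W.1 i = W.1 hex.choose := (hkey W _ _ hex.choose_spec).symm
    have h4 : W'.1 hex.choose = W'.1 i := hkey W' _ _ hex.choose_spec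
    rw [h3, h2, h4]
  have hfin := pat_finite d N A
  have hcard := Nat.card_le_card_of_injective Ψ hinj
  calc Nat.card (Pat d N (OmegaA d A)) ≤
      Nat.card ((Fin vh × ({j : Fin d // j ≠ js} → Fin B)) → {a // a ∈ A}) := hcard
    _ = A.card ^ (vh * B ^ (d - 1)) := by
        rw [Nat.card_fun, Nat.card_eq_fintype_card, Nat.card_eq_fintype_card]
        congr 1
        · exact Fintype.card_coe A
        · rw [Fintype.card_prod, Fintype.card_fun, Fintype.card_fin, Fintype.card_fin]
          congr 1
          have : Fintype.card {j : Fin d // j ≠ js} = d - 1 := by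
            rw [Fintype.card_subtype_compl, Fintype.card_subtype_eq, Fintype.card_fin]
          rw [this]


lemma entd_np (d : ℕ) (hd : 0 < d) (A : Finset (Fin d → ℤ)) (hA : A.Nonempty)
    (hc : A.card ≤ 2) : ¬ 0 < entd d (OmegaA d A) := by
  classical
  obtain ⟨α0, hα0⟩ := hA
  have hc1 : 1 ≤ A.card := Finset.card_pos.mpr ⟨α0, hα0⟩
  -- a period vector
  obtain ⟨v, js, hvj, hper⟩ :
      ∃ (v : Fin d → ℤ) (js : Fin d), 0 < v js ∧
        ∀ ω ∈ OmegaA d A, ∀ n, ω (n + v) = ω n := by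
    have h12 : A.card = 1 ∨ A.card = 2 := by omega
    rcases h12 with h1 | h2
    · obtain ⟨α, hα⟩ := Finset.card_eq_one.mp h1
      refine ⟨Function.update (0 : Fin d → ℤ) ⟨0, hd⟩ 1, ⟨0, hd⟩, by simp, ?_⟩
      intro ω hΩ n
      have hval : ∀ m, ω m = α := by
        intro m
        have := hΩ.1 m
        rw [hα] at this
        exact Finset.mem_singleton.mp this
      rw [hval, hval]
    · obtain ⟨α, β, hαβ, hAeq⟩ := Finset.card_eq_two.mp h2
      have hmem : ∀ ω ∈ OmegaA d A, ∀ n, ω n = α ∨ ω n = β := by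
        intro ω hΩ n
        have := hΩ.1 n
        rw [hAeq] at this
        simpa using this
      have hv0 : β - α ≠ 0 := sub_ne_zero.mpr (Ne.symm hαβ)
      obtain ⟨js, hjs⟩ := exists_ne_coord hv0
      rcases lt_trichotomy ((β - α) js) 0 with hneg | hzero | hpos
      · refine ⟨-(β - α), js, by simpa using hneg, ?_⟩
        intro ω hΩ n
        have hper0 := rigid hαβ ω (hmem ω hΩ) hΩ.2
        have := hper0 (n + -(β - α))
        have heq : n + -(β - α) + (β - α) = n := by abel
        rw [heq] at this
        exact this.symm
      · exact absurd hzero hjs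
      · exact ⟨β - α, js, hpos, fun ω hΩ => rigid hαβ ω (hmem ω hΩ) hΩ.2⟩
  set Vm : ℕ := ∑ j : Fin d, (v j).natAbs with hVm
  have hVb : ∀ j, |v j| ≤ (Vm : ℤ) := by
    intro j
    have h0' : (v j).natAbs ≤ ∑ i : Fin d, (v i).natAbs :=
      Finset.single_le_sum (f := fun i => (v i).natAbs)
        (fun i _ => Nat.zero_le _) (Finset.mem_univ j)
    rw [Int.abs_eq_natAbs]
    exact_mod_cast h0'
  set vh : ℕ := (v js).toNat with hvh
  set F : ℕ → ℝ := fun N =>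
    Real.log (Nat.card (Pat d N (OmegaA d A))) / (N : ℝ) ^ d with hF
  set Cst : ℝ := (vh : ℝ) * ((2 * Vm + 2 : ℕ) : ℝ) ^ (d - 1) * Real.log A.card with hCst
  have hL0 : 0 ≤ Real.log A.card := Real.log_nonneg (by exact_mod_cast hc1)
  have hCst0 : 0 ≤ Cst := by positivity
  have hup : ∀ N, 1 ≤ N → F N ≤ Cst / N := by
    intro N hN
    have hcu := count_upper d N A α0 hα0 v js hvj Vm hVb hper
    have hpos := pat_card_pos d N A ⟨α0, hα0⟩
    have hNR : (0:ℝ) < (N:ℝ) := by exact_mod_cast hN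
    have hNd : (0:ℝ) < (N:ℝ)^d := by positivity
    set B : ℕ := N + 2 * (N * Vm) + 1 with hB
    set E : ℕ := vh * B ^ (d - 1) with hE
    have hlog : Real.log (Nat.card (Pat d N (OmegaA d A))) ≤ (E:ℝ) * Real.log A.card := by
      calc Real.log (Nat.card (Pat d N (OmegaA d A))) ≤ Real.log ((A.card : ℝ) ^ E) := by
            apply Real.log_le_log (by exact_mod_cast hpos)
            exact_mod_cast hcu
        _ = (E:ℝ) * Real.log A.card := by rw [Real.log_pow]
    have hBle : B ≤ N * (2 * Vm + 2) := by
      rw [hB]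
      nlinarith
    have hEle : E ≤ vh * (2 * Vm + 2) ^ (d - 1) * N ^ (d - 1) := by
      rw [hE]
      calc vh * B ^ (d-1) ≤ vh * (N * (2 * Vm + 2)) ^ (d - 1) :=
            Nat.mul_le_mul_left _ (Nat.pow_le_pow_left hBle _)
        _ = vh * (2 * Vm + 2) ^ (d - 1) * N ^ (d - 1) := by
            rw [mul_pow]
            ring
    have hEL : (E:ℝ) * Real.log A.card ≤
        (vh : ℝ) * ((2 * Vm + 2 : ℕ) : ℝ) ^ (d - 1) * (N:ℝ) ^ (d - 1) * Real.log A.card := by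
      apply mul_le_mul_of_nonneg_right _ hL0
      have : ((E:ℕ):ℝ) ≤ ((vh * (2 * Vm + 2) ^ (d - 1) * N ^ (d - 1) : ℕ) : ℝ) := by
        exact_mod_cast hEle
      calc (E:ℝ) ≤ ((vh * (2 * Vm + 2) ^ (d - 1) * N ^ (d - 1) : ℕ) : ℝ) := this
        _ = (vh : ℝ) * ((2 * Vm + 2 : ℕ) : ℝ) ^ (d - 1) * (N:ℝ) ^ (d - 1) := by push_cast; ring
    have hNsplit : (N:ℝ) ^ d = (N:ℝ) ^ (d - 1) * (N:ℝ) := by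
      rw [← pow_succ]
      congr 1
      omega
    rw [hF, div_le_div_iff₀ hNd hNR]
    calc Real.log (Nat.card (Pat d N (OmegaA d A))) * (N:ℝ)
        ≤ ((vh : ℝ) * ((2 * Vm + 2 : ℕ) : ℝ) ^ (d - 1) * (N:ℝ) ^ (d - 1) * Real.log A.card) * (N:ℝ) := by
          apply mul_le_mul_of_nonneg_right _ (le_of_lt hNR)
          exact le_trans hlog hEL
      _ = Cst * ((N:ℝ) ^ (d-1) * (N:ℝ)) := by rw [hCst]; ring
      _ = Cst * (N:ℝ) ^ d := by rw [hNsplit]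
  have hge : ∀ᶠ N in Filter.atTop, (0:ℝ) ≤ F N := by
    rw [Filter.eventually_atTop]
    refine ⟨1, fun N hN => ?_⟩
    have hpos := pat_card_pos d N A ⟨α0, hα0⟩
    have h1 : (0:ℝ) ≤ Real.log (Nat.card (Pat d N (OmegaA d A))) :=
      Real.log_nonneg (by exact_mod_cast hpos)
    have hNd : (0:ℝ) < (N:ℝ)^d := by
      have : (0:ℝ) < (N:ℝ) := by exact_mod_cast hN
      positivity
    exact div_nonneg h1 (le_of_lt hNd)
  have hcob : Filter.IsCoboundedUnder (· ≤ ·) Filter.atTop F :=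
    Filter.isCoboundedUnder_le_of_eventually_le Filter.atTop hge
  have hle : ∀ ε : ℝ, 0 < ε → Filter.limsup F Filter.atTop ≤ ε := by
    intro ε hε
    apply Filter.limsup_le_of_le hcob
    rw [Filter.eventually_atTop]
    refine ⟨max 1 (⌈Cst / ε⌉₊ + 1), fun N hN => ?_⟩
    have hN1 : 1 ≤ N := le_trans (le_max_left _ _) hN
    have hN2 : (⌈Cst / ε⌉₊ + 1 : ℕ) ≤ N := le_trans (le_max_right _ _) hN
    have hNR : (0:ℝ) < (N:ℝ) := by exact_mod_cast hN1
    refine le_trans (hup N hN1) ?_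
    rw [div_le_iff₀ hNR]
    have hceil : Cst / ε ≤ (⌈Cst / ε⌉₊ : ℝ) := Nat.le_ceil _
    have hNge : ((⌈Cst / ε⌉₊ + 1 : ℕ) : ℝ) ≤ (N:ℝ) := by exact_mod_cast hN2
    have : Cst ≤ ε * (⌈Cst / ε⌉₊ : ℝ) := by
      rw [← div_le_iff₀' hε] at *
      linarith
    push_cast at hNge
    nlinarith
  intro h0
  have h1 := hle (Filter.limsup F Filter.atTop / 2) (by
    have : entd d (OmegaA d A) = Filter.limsup F Filter.atTop := rfl
    rw [this] at h0
    linarith)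
  have : entd d (OmegaA d A) = Filter.limsup F Filter.atTop := rfl
  rw [this] at h0
  linarith

end PEaux

/-- For `d ≥ 2`, `Ω_A` has positive topological entropy iff `|A| ≥ 3`. -/
theorem positive_entropy_iff (d : ℕ) (hd : 2 ≤ d) (A : Finset (Fin d → ℤ))
    (hA : A.Nonempty) :
    0 < entd d (OmegaA d A) ↔ 3 ≤ A.card := by
  constructor
  · intro h
    by_contra h3
    push_neg at h3
    exact PEaux.entd_np d (by omega) A hA (by omega) h
  · intro h3
    exact PEaux.entd_pos d (by omega) A h3
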